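/- arXiv:1512.02880 — 7 statements merged into one kernel-verified Lean document; each statement's English description precedes it below -/
import Mathlib

section
/- Let F be an algebraically closed field of characteristic 0. The set of common zeros (a,b,c) ∈ F³ of the polynomials a³−ab, a²b−ac, a²c+a², ab²−bc, b³+ab, b²c+b², ac²+ac, bc²+bc, c³+c² is exactly {(0,0,0), (0,0,−1), (−1,1,−1), (α,α²,−1), (α⁻¹,α⁻²,−1)} where α is a primitive 6th root of unity (α²−α+1=0); in particular this set has exactly 5 elements. -/
lemma aux_mem {F : Type*} [Field F] (x : F) (h : x ^ 3 = -1) :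
    x ^ 3 - x * x ^ 2 = 0 ∧
    x ^ 2 * x ^ 2 - x * (-1) = 0 ∧
    x ^ 2 * (-1) + x ^ 2 = 0 ∧
    x * (x ^ 2) ^ 2 - x ^ 2 * (-1) = 0 ∧
    (x ^ 2) ^ 3 + x * x ^ 2 = 0 ∧
    (x ^ 2) ^ 2 * (-1) + (x ^ 2) ^ 2 = 0 ∧
    x * (-1 : F) ^ 2 + x * (-1) = 0 ∧
    x ^ 2 * (-1 : F) ^ 2 + x ^ 2 * (-1) = 0 ∧
    (-1 : F) ^ 3 + (-1 : F) ^ 2 = 0 :=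
  ⟨by ring, by linear_combination x * h, by ring, by linear_combination x ^ 2 * h,
    by linear_combination x ^ 3 * h, by ring, by ring, by ring, by ring⟩

/-- Rank 1, case 1: the zero set of the nine polynomials is exactly 5 points. -/
theorem rank1_case1_zero_set (F : Type*) [Field F] [IsAlgClosed F] [CharZero F]
    (α : F) (hα : α ^ 2 - α + 1 = 0) :
    {p : F × F × F |
      p.1 ^ 3 - p.1 * p.2.1 = 0 ∧
      p.1 ^ 2 * p.2.1 - p.1 * p.2.2 = 0 ∧
      p.1 ^ 2 * p.2.2 + p.1 ^ 2 = 0 ∧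
      p.1 * p.2.1 ^ 2 - p.2.1 * p.2.2 = 0 ∧
      p.2.1 ^ 3 + p.1 * p.2.1 = 0 ∧
      p.2.1 ^ 2 * p.2.2 + p.2.1 ^ 2 = 0 ∧
      p.1 * p.2.2 ^ 2 + p.1 * p.2.2 = 0 ∧
      p.2.1 * p.2.2 ^ 2 + p.2.1 * p.2.2 = 0 ∧
      p.2.2 ^ 3 + p.2.2 ^ 2 = 0} =
    {(0, 0, 0), (0, 0, -1), (-1, 1, -1), (α, α ^ 2, -1), (α⁻¹, (α⁻¹) ^ 2, -1)} ∧
    ({(0, 0, 0), (0, 0, -1), (-1, 1, -1), (α, α ^ 2, -1), (α⁻¹, (α⁻¹) ^ 2, -1)}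
      : Set (F × F × F)).ncard = 5 := by
  have hα0 : α ≠ 0 := by
    rintro rfl
    norm_num at hα
  have hα3 : α ^ 3 = -1 := by linear_combination (α + 1) * hα
  have hαinv : α⁻¹ = 1 - α := by
    field_simp
    linear_combination hα
  have hinv3 : (α⁻¹) ^ 3 = -1 := by rw [hαinv]; linear_combination (2 - α) * hα
  have hαne1 : α ≠ -1 := by
    rintro rfl
    norm_num at hα
  have hαne2 : α ≠ 2 := by
    rintro rfl
    norm_num at hα
  have hinvne : α⁻¹ ≠ α := by
    intro h
    have h1 := mul_inv_cancel₀ hα0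
    rw [h] at h1
    have h2 : α ^ 2 = 1 := by linear_combination h1
    exact hαne2 (by linear_combination h2 - hα)
  have hinvne1 : α⁻¹ ≠ -1 := by
    rw [hαinv]
    intro h
    exact hαne2 (by linear_combination -h)
  have hinv0 : α⁻¹ ≠ 0 := inv_ne_zero hα0
  constructor
  · ext ⟨a, b, c⟩
    simp only [Set.mem_setOf_eq, Set.mem_insert_iff, Set.mem_singleton_iff, Prod.mk.injEq]
    constructor
    · rintro ⟨h1, h2, h3, h4, h5, h6, h7, h8, h9⟩
      have hc : c = 0 ∨ c = -1 := by
        have h : c ^ 2 * (c + 1) = 0 := by linear_combination h9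
        rcases mul_eq_zero.mp h with h | h
        · exact Or.inl (pow_eq_zero_iff (by norm_num) |>.mp h)
        · exact Or.inr (by linear_combination h)
      rcases hc with rfl | rfl
      · have ha : a = 0 := by
          have : a ^ 2 = 0 := by linear_combination h3
          exact pow_eq_zero_iff (by norm_num) |>.mp this
        have hb : b = 0 := by
          have : b ^ 2 = 0 := by linear_combination h6
          exact pow_eq_zero_iff (by norm_num) |>.mp this
        exact Or.inl ⟨ha, hb, rfl⟩
      · by_cases ha : a = 0
        · subst ha
          have hb : b = 0 := by linear_combination h4
          exact Or.inr (Or.inl ⟨rfl, hb, rfl⟩)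
        · have hb : b = a ^ 2 := by
            have h : a * (a ^ 2 - b) = 0 := by linear_combination h1
            rcases mul_eq_zero.mp h with h | h
            · exact absurd h ha
            · linear_combination -h
          subst hb
          have ha3 : a ^ 3 = -1 := by
            have h : a * (a ^ 3 + 1) = 0 := by linear_combination h2
            rcases mul_eq_zero.mp h with h | h
            · exact absurd h ha
            · linear_combination h
          have h : (a + 1) * ((a - α) * (a - α⁻¹)) = 0 := by
            rw [hαinv]
            linear_combination ha3 - (a + 1) * hα
          rcases mul_eq_zero.mp h with h | h
          · have : a = -1 := by linear_combination h
            subst this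
            exact Or.inr (Or.inr (Or.inl ⟨rfl, by norm_num, rfl⟩))
          · rcases mul_eq_zero.mp h with h | h
            · have : a = α := by linear_combination h
              subst this
              exact Or.inr (Or.inr (Or.inr (Or.inl ⟨rfl, rfl, rfl⟩)))
            · have : a = α⁻¹ := by linear_combination h
              subst this
              exact Or.inr (Or.inr (Or.inr (Or.inr ⟨rfl, rfl, rfl⟩)))
    · rintro (⟨rfl, rfl, rfl⟩ | ⟨rfl, rfl, rfl⟩ | ⟨rfl, rfl, rfl⟩ | ⟨rfl, rfl, rfl⟩ |
        ⟨rfl, rfl, rfl⟩)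
      · norm_num
      · norm_num
      · norm_num
      · exact aux_mem _ hα3
      · exact aux_mem _ hinv3
  · rw [Set.ncard_insert_of_notMem, Set.ncard_insert_of_notMem,
      Set.ncard_insert_of_notMem, Set.ncard_pair]
    · simp only [ne_eq, Prod.mk.injEq, not_and]
      intro h
      exact absurd h.symm hinvne
    · simp only [Set.mem_insert_iff, Set.mem_singleton_iff, Prod.mk.injEq, not_or, not_and]
      exact ⟨fun h => absurd h.symm hαne1, fun h => absurd h.symm hinvne1⟩
    · simp only [Set.mem_insert_iff, Set.mem_singleton_iff, Prod.mk.injEq, not_or, not_and]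
      refine ⟨fun h => ?_, fun h => absurd h.symm hα0, fun h => absurd h.symm hinv0⟩
      norm_num at h
    · simp only [Set.mem_insert_iff, Set.mem_singleton_iff, Prod.mk.injEq, not_or, not_and]
      refine ⟨fun h₁ h₂ h₃ => ?_, fun h => ?_, fun h => absurd h.symm hα0,
        fun h => absurd h.symm hinv0⟩
      · norm_num at h₃
      · norm_num at h
end

section
/- Let F be a field of characteristic 0. The ideal of F[a,b,c] generated by a³−ab, a²b−ac, a²c+a², ab²−bc, b³+ab, b²c+b², ac²+ac, bc²+bc, c³+c² contains the polynomials b²−ca, cb+a², a(a²−b), a(ab−c), a²(c+1), ac(c+1), and c²(c+1). -/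
open MvPolynomial

/-- The Gröbner basis elements belong to the ideal generated by the nine polynomials. -/
theorem rank1_case1_groebner_membership (F : Type*) [Field F] [CharZero F] :
    ∀ p ∈ ({(X 1) ^ 2 - X 2 * X 0,
            X 2 * X 1 + (X 0) ^ 2,
            X 0 * ((X 0) ^ 2 - X 1),
            X 0 * (X 0 * X 1 - X 2),
            (X 0) ^ 2 * (X 2 + 1),
            X 0 * X 2 * (X 2 + 1),
            (X 2) ^ 2 * (X 2 + 1)} : Set (MvPolynomial (Fin 3) F)),
      p ∈ Ideal.span ({(X 0) ^ 3 - X 0 * X 1,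
            (X 0) ^ 2 * X 1 - X 0 * X 2,
            (X 0) ^ 2 * X 2 + (X 0) ^ 2,
            X 0 * (X 1) ^ 2 - X 1 * X 2,
            (X 1) ^ 3 + X 0 * X 1,
            (X 1) ^ 2 * X 2 + (X 1) ^ 2,
            X 0 * (X 2) ^ 2 + X 0 * X 2,
            X 1 * (X 2) ^ 2 + X 1 * X 2,
            (X 2) ^ 3 + (X 2) ^ 2} : Set (MvPolynomial (Fin 3) F)) := by
  intro p hp
  set I := Ideal.span ({(X 0) ^ 3 - X 0 * X 1,
            (X 0) ^ 2 * X 1 - X 0 * X 2,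
            (X 0) ^ 2 * X 2 + (X 0) ^ 2,
            X 0 * (X 1) ^ 2 - X 1 * X 2,
            (X 1) ^ 3 + X 0 * X 1,
            (X 1) ^ 2 * X 2 + (X 1) ^ 2,
            X 0 * (X 2) ^ 2 + X 0 * X 2,
            X 1 * (X 2) ^ 2 + X 1 * X 2,
            (X 2) ^ 3 + (X 2) ^ 2} : Set (MvPolynomial (Fin 3) F)) with hI
  have h1 : (X 0) ^ 3 - X 0 * X 1 ∈ I := Ideal.subset_span (Set.mem_insert _ _)
  have h2 : (X 0 : MvPolynomial (Fin 3) F) ^ 2 * X 1 - X 0 * X 2 ∈ I :=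
    Ideal.subset_span (Set.mem_insert_of_mem _ (Set.mem_insert _ _))
  have h3 : (X 0 : MvPolynomial (Fin 3) F) ^ 2 * X 2 + (X 0) ^ 2 ∈ I :=
    Ideal.subset_span (Set.mem_insert_of_mem _ (Set.mem_insert_of_mem _ (Set.mem_insert _ _)))
  have h4 : (X 0 : MvPolynomial (Fin 3) F) * (X 1) ^ 2 - X 1 * X 2 ∈ I :=
    Ideal.subset_span (Set.mem_insert_of_mem _ (Set.mem_insert_of_mem _ (Set.mem_insert_of_mem _ (Set.mem_insert _ _))))
  have h6 : (X 1 : MvPolynomial (Fin 3) F) ^ 2 * X 2 + (X 1) ^ 2 ∈ I :=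
    Ideal.subset_span (Set.mem_insert_of_mem _ (Set.mem_insert_of_mem _ (Set.mem_insert_of_mem _ (Set.mem_insert_of_mem _ (Set.mem_insert_of_mem _ (Set.mem_insert _ _))))))
  have h7 : (X 0 : MvPolynomial (Fin 3) F) * (X 2) ^ 2 + X 0 * X 2 ∈ I :=
    Ideal.subset_span (Set.mem_insert_of_mem _ (Set.mem_insert_of_mem _ (Set.mem_insert_of_mem _ (Set.mem_insert_of_mem _ (Set.mem_insert_of_mem _ (Set.mem_insert_of_mem _ (Set.mem_insert _ _)))))))
  have h9 : (X 2 : MvPolynomial (Fin 3) F) ^ 3 + (X 2) ^ 2 ∈ I :=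
    Ideal.subset_span (Set.mem_insert_of_mem _ (Set.mem_insert_of_mem _ (Set.mem_insert_of_mem _ (Set.mem_insert_of_mem _ (Set.mem_insert_of_mem _ (Set.mem_insert_of_mem _ (Set.mem_insert_of_mem _ (Set.mem_insert_of_mem _ (Set.mem_singleton _)))))))))
  simp only [Set.mem_insert_iff, Set.mem_singleton_iff] at hp
  rcases hp with h | h | h | h | h | h | h <;> subst h
  · -- b² - ca = b²·g1 + (1 - ab)·g2 + (-b)·g3 + b·g4 + g6
    have key : (X 1 : MvPolynomial (Fin 3) F) ^ 2 - X 2 * X 0 =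
        (X 1) ^ 2 * ((X 0) ^ 3 - X 0 * X 1)
        + (1 - X 0 * X 1) * ((X 0) ^ 2 * X 1 - X 0 * X 2)
        + (-(X 1)) * ((X 0) ^ 2 * X 2 + (X 0) ^ 2)
        + (X 1) * (X 0 * (X 1) ^ 2 - X 1 * X 2)
        + ((X 1) ^ 2 * X 2 + (X 1) ^ 2) := by ring
    rw [key]
    exact I.add_mem (I.add_mem (I.add_mem (I.add_mem (I.mul_mem_left _ h1)
      (I.mul_mem_left _ h2)) (I.mul_mem_left _ h3)) (I.mul_mem_left _ h4)) h6
  · -- cb + a² = -b·g1 + a·g2 + g3 - g4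
    have key : (X 2 : MvPolynomial (Fin 3) F) * X 1 + (X 0) ^ 2 =
        (-(X 1)) * ((X 0) ^ 3 - X 0 * X 1)
        + (X 0) * ((X 0) ^ 2 * X 1 - X 0 * X 2)
        + ((X 0) ^ 2 * X 2 + (X 0) ^ 2)
        - (X 0 * (X 1) ^ 2 - X 1 * X 2) := by ring
    rw [key]
    exact I.sub_mem (I.add_mem (I.add_mem (I.mul_mem_left _ h1)
      (I.mul_mem_left _ h2)) h3) h4
  · have key : (X 0 : MvPolynomial (Fin 3) F) * ((X 0) ^ 2 - X 1) =
        (X 0) ^ 3 - X 0 * X 1 := by ring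
    rw [key]; exact h1
  · have key : (X 0 : MvPolynomial (Fin 3) F) * (X 0 * X 1 - X 2) =
        (X 0) ^ 2 * X 1 - X 0 * X 2 := by ring
    rw [key]; exact h2
  · have key : (X 0 : MvPolynomial (Fin 3) F) ^ 2 * (X 2 + 1) =
        (X 0) ^ 2 * X 2 + (X 0) ^ 2 := by ring
    rw [key]; exact h3
  · have key : (X 0 : MvPolynomial (Fin 3) F) * X 2 * (X 2 + 1) =
        X 0 * (X 2) ^ 2 + X 0 * X 2 := by ring
    rw [key]; exact h7
  · have key : (X 2 : MvPolynomial (Fin 3) F) ^ 2 * (X 2 + 1) =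
        (X 2) ^ 3 + (X 2) ^ 2 := by ring
    rw [key]; exact h9
end

section
/- Let F be a field of characteristic 0. The common zero set in F² of the four polynomials a⁴−a²b, a³b−ab², ab³+a²b, b⁴+ab² is exactly {(0,0), (−1,1), (α,α²), (α⁻¹,α⁻²)} where α ranges over the roots of x²−x+1; in particular if F is algebraically closed the set has exactly 4 elements. -/
lemma rank2_case3_aux {F : Type*} [Field F] (x : F) (hx : x ^ 2 - x + 1 = 0) :
    x ^ 4 - x ^ 2 * x ^ 2 = 0 ∧
    x ^ 3 * x ^ 2 - x * (x ^ 2) ^ 2 = 0 ∧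
    x * (x ^ 2) ^ 3 + x ^ 2 * x ^ 2 = 0 ∧
    (x ^ 2) ^ 4 + x * (x ^ 2) ^ 2 = 0 :=
  ⟨by ring, by ring,
    by linear_combination (x ^ 4 + x ^ 5) * hx,
    by linear_combination (x ^ 5 + x ^ 6) * hx⟩

/-- Rank 2, case 3: the common zero set of the four polynomials is exactly four points. -/
theorem rank2_case3_zero_set (F : Type*) [Field F] [IsAlgClosed F] [CharZero F]
    (α : F) (hα : α ^ 2 - α + 1 = 0) :
    {p : F × F |
      p.1 ^ 4 - p.1 ^ 2 * p.2 = 0 ∧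
      p.1 ^ 3 * p.2 - p.1 * p.2 ^ 2 = 0 ∧
      p.1 * p.2 ^ 3 + p.1 ^ 2 * p.2 = 0 ∧
      p.2 ^ 4 + p.1 * p.2 ^ 2 = 0} =
    {(0, 0), (-1, 1), (α, α ^ 2), (α⁻¹, (α⁻¹) ^ 2)} ∧
    ({(0, 0), (-1, 1), (α, α ^ 2), (α⁻¹, (α⁻¹) ^ 2)} : Set (F × F)).ncard = 4 := by
  have hα0 : α ≠ 0 := by
    rintro rfl
    norm_num at hα
  have hinv : α⁻¹ = 1 - α := by
    field_simp
    linear_combination hα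
  have hinvroot : (α⁻¹) ^ 2 - α⁻¹ + 1 = 0 := by
    rw [hinv]; linear_combination hα
  have hαne1 : α ≠ -1 := by
    rintro rfl
    norm_num at hα
  have hαne2 : α ≠ α⁻¹ := by
    rw [hinv]
    intro h
    have h3 : (3 : F) = 0 := by linear_combination 4 * hα - (2 * α - 1) * h
    norm_num at h3
  constructor
  · ext ⟨a, b⟩
    simp only [Set.mem_setOf_eq, Set.mem_insert_iff, Set.mem_singleton_iff, Prod.mk.injEq]
    constructor
    · rintro ⟨h1, h2, h3, h4⟩
      by_cases ha : a = 0
      · subst ha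
        left
        have hb : b = 0 := by
          have : b ^ 4 = 0 := by linear_combination h4
          exact pow_eq_zero_iff (by norm_num) |>.mp this
        exact ⟨rfl, hb⟩
      · have hb : b = a ^ 2 := by
          have : a ^ 2 * (a ^ 2 - b) = 0 := by linear_combination h1
          rcases mul_eq_zero.mp this with h | h
          · exact absurd (pow_eq_zero_iff (by norm_num) |>.mp h) ha
          · exact (sub_eq_zero.mp h).symm
        subst hb
        have h3' : a ^ 4 * (a ^ 3 + 1) = 0 := by linear_combination h3
        have hcube : a ^ 3 + 1 = 0 := by
          rcases mul_eq_zero.mp h3' with h | h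
          · exact absurd (pow_eq_zero_iff (by norm_num) |>.mp h) ha
          · exact h
        have hfac : (a + 1) * (a ^ 2 - a + 1) = 0 := by linear_combination hcube
        rcases mul_eq_zero.mp hfac with h | h
        · right; left
          have ha1 : a = -1 := eq_neg_of_add_eq_zero_left h
          subst ha1
          norm_num
        · have hfac2 : (a - α) * (a - α⁻¹) = 0 := by
            rw [hinv]
            linear_combination h - hα
          rcases mul_eq_zero.mp hfac2 with h' | h'
          · right; right; left
            have haα : a = α := sub_eq_zero.mp h'
            exact ⟨haα, by rw [haα]⟩
          · right; right; right
            have haα : a = α⁻¹ := sub_eq_zero.mp h'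
            exact ⟨haα, by rw [haα]⟩
    · rintro (⟨rfl, rfl⟩ | ⟨rfl, rfl⟩ | ⟨h1, h2⟩ | ⟨h1, h2⟩)
      · norm_num
      · norm_num
      · rw [h1, h2]; exact rank2_case3_aux α hα
      · rw [h1, h2]; exact rank2_case3_aux α⁻¹ hinvroot
  · have h01 : ((0, 0) : F × F) ≠ (-1, 1) := by
      simp only [Prod.mk.injEq, ne_eq, not_and]
      intro h; norm_num at h
    have h02 : ((0, 0) : F × F) ≠ (α, α ^ 2) := by
      simp only [Prod.mk.injEq, ne_eq, not_and]
      intro h; exact absurd h.symm hα0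
    have h03 : ((0, 0) : F × F) ≠ (α⁻¹, (α⁻¹) ^ 2) := by
      simp only [Prod.mk.injEq, ne_eq, not_and]
      intro h; exact absurd h.symm (inv_ne_zero hα0)
    have h12 : ((-1, 1) : F × F) ≠ (α, α ^ 2) := by
      simp only [Prod.mk.injEq, ne_eq, not_and]
      intro h; exact absurd h.symm hαne1
    have h13 : ((-1, 1) : F × F) ≠ (α⁻¹, (α⁻¹) ^ 2) := by
      simp only [Prod.mk.injEq, ne_eq, not_and]
      intro h
      rw [hinv] at h
      have h2 : α = 2 := by linear_combination h
      rw [h2] at hα; norm_num at hα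
    have h23 : ((α, α ^ 2) : F × F) ≠ (α⁻¹, (α⁻¹) ^ 2) := by
      simp only [Prod.mk.injEq, ne_eq, not_and]
      intro h; exact absurd h hαne2
    have m0 : ((0, 0) : F × F) ∉ ({(-1, 1), (α, α ^ 2), (α⁻¹, (α⁻¹) ^ 2)} : Set (F × F)) := by
      simp only [Set.mem_insert_iff, Set.mem_singleton_iff]
      push_neg
      exact ⟨h01, h02, h03⟩
    have m1 : ((-1, 1) : F × F) ∉ ({(α, α ^ 2), (α⁻¹, (α⁻¹) ^ 2)} : Set (F × F)) := by
      simp only [Set.mem_insert_iff, Set.mem_singleton_iff]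
      push_neg
      exact ⟨h12, h13⟩
    have m2 : ((α, α ^ 2) : F × F) ∉ ({(α⁻¹, (α⁻¹) ^ 2)} : Set (F × F)) := by
      simpa using h23
    rw [Set.ncard_insert_of_notMem m0, Set.ncard_insert_of_notMem m1,
      Set.ncard_insert_of_notMem m2, Set.ncard_singleton]
end

section
/- Let F be an algebraically closed field of characteristic 0. The common zero set in F² of the four polynomials a⁴+a²b, a³b+ab², ab³+a²b, b⁴+ab² is exactly {(0,0), (−1,−1), (α,α⁻¹), (α⁻¹,α)} where α satisfies α²−α+1=0. -/
/-- Rank 2, case 4: the common zero set of the four polynomials is exactly four points. -/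
theorem rank2_case4_zero_set (F : Type*) [Field F] [IsAlgClosed F] [CharZero F]
    (α : F) (hα : α ^ 2 - α + 1 = 0) :
    {p : F × F |
      p.1 ^ 4 + p.1 ^ 2 * p.2 = 0 ∧
      p.1 ^ 3 * p.2 + p.1 * p.2 ^ 2 = 0 ∧
      p.1 * p.2 ^ 3 + p.1 ^ 2 * p.2 = 0 ∧
      p.2 ^ 4 + p.1 * p.2 ^ 2 = 0} =
    {(0, 0), (-1, -1), (α, α⁻¹), (α⁻¹, α)} := by
  have hα0 : α ≠ 0 := by
    intro h; rw [h] at hα; norm_num at hα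
  have hinv : α⁻¹ = 1 - α :=
    inv_eq_of_mul_eq_one_right (by linear_combination -hα)
  ext ⟨a, b⟩
  simp only [Set.mem_setOf_eq, Set.mem_insert_iff, Set.mem_singleton_iff, Prod.mk.injEq]
  constructor
  · rintro ⟨h1, h2, h3, h4⟩
    by_cases ha : a = 0
    · subst ha
      have hb : b = 0 := by
        have h : b ^ 4 = 0 := by linear_combination h4
        exact pow_eq_zero_iff (n := 4) (by norm_num) |>.1 h
      exact Or.inl ⟨rfl, hb⟩
    · have e1 : a ^ 2 + b = 0 := by
        have h : a ^ 2 * (a ^ 2 + b) = 0 := by linear_combination h1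
        rcases mul_eq_zero.1 h with h | h
        · exact absurd (pow_eq_zero_iff (n := 2) (by norm_num) |>.1 h) ha
        · exact h
      have hb2 : b = -a ^ 2 := by linear_combination e1
      subst hb2
      have e2 : a ^ 4 + a = 0 := by
        have h : a ^ 4 * (a ^ 4 + a) = 0 := by linear_combination h4
        rcases mul_eq_zero.1 h with h | h
        · exact absurd (pow_eq_zero_iff (n := 4) (by norm_num) |>.1 h) ha
        · exact h
      have key : a * ((a + 1) * (a ^ 2 - a + 1)) = 0 := by linear_combination e2
      rcases mul_eq_zero.1 key with h | h
      · exact absurd h ha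
      rcases mul_eq_zero.1 h with h | h
      · exact Or.inr (Or.inl ⟨by linear_combination h, by linear_combination (1 - a) * h⟩)
      · have hq : (a - α) * (a - α⁻¹) = 0 := by
          rw [hinv]; linear_combination h - hα
        rcases mul_eq_zero.1 hq with h' | h'
        · have haα : a = α := by linear_combination h'
          refine Or.inr (Or.inr (Or.inl ⟨haα, ?_⟩))
          rw [hinv, haα]; linear_combination -hα
        · have haα : a = 1 - α := by rw [hinv] at h'; linear_combination h'
          refine Or.inr (Or.inr (Or.inr ⟨by rw [hinv]; exact haα, ?_⟩))
          rw [haα]; linear_combination -hα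
  · rintro (⟨h1, h2⟩ | ⟨h1, h2⟩ | ⟨h1, h2⟩ | ⟨h1, h2⟩) <;> rw [h1, h2] <;>
      (try rw [hinv]) <;> refine ⟨?_, ?_, ?_, ?_⟩
    all_goals first
      | ring1
      | linear_combination α ^ 2 * hα
      | linear_combination (α - α ^ 2) * hα
      | linear_combination (1 - α) ^ 2 * hα
end

section
/- Let F be a field of characteristic 0 and consider the 5×5 matrix B over F[a,b,c,d] with rows [0, a²c+acd, abc+ad²+ac, abd+ad, b²d+bd], [−d, c³+ac−cd, c²d+bc, acd+cd², bcd+d³], [0, a³+abc, a²b+abd+a², ab²+ab, b³+b²], [−ad, −a, −ac, 0, 0], [cd, ac²−bc, acd+c², a²d+bcd+cd, abd+bd²+d²]. Then det(B) = −a²d²(ad−bc)²(ad−bc−b−c−1)(ad−bc−c+α(b+1))(ad−bc−c+α⁻¹(b+1)), where α and α⁻¹ are the two roots of x²−x+1 in F (assume they exist in F). -/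
set_option maxHeartbeats 1000000 in
theorem det_fin_four {R : Type*} [CommRing R] (M : Matrix (Fin 4) (Fin 4) R) :
    M.det = M 0 0 * (M 1 1 * (M 2 2 * M 3 3 - M 2 3 * M 3 2) - M 1 2 * (M 2 1 * M 3 3 - M 2 3 * M 3 1) + M 1 3 * (M 2 1 * M 3 2 - M 2 2 * M 3 1))
          - M 0 1 * (M 1 0 * (M 2 2 * M 3 3 - M 2 3 * M 3 2) - M 1 2 * (M 2 0 * M 3 3 - M 2 3 * M 3 0) + M 1 3 * (M 2 0 * M 3 2 - M 2 2 * M 3 0))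
          + M 0 2 * (M 1 0 * (M 2 1 * M 3 3 - M 2 3 * M 3 1) - M 1 1 * (M 2 0 * M 3 3 - M 2 3 * M 3 0) + M 1 3 * (M 2 0 * M 3 1 - M 2 1 * M 3 0))
          - M 0 3 * (M 1 0 * (M 2 1 * M 3 2 - M 2 2 * M 3 1) - M 1 1 * (M 2 0 * M 3 2 - M 2 2 * M 3 0) + M 1 2 * (M 2 0 * M 3 1 - M 2 1 * M 3 0)) := by
  rw [Matrix.det_succ_row_zero]
  simp [Fin.sum_univ_succ, Matrix.det_fin_three, Fin.succAbove, show (Fin.succ 2 : Fin 4) = 3 from rfl, show (Fin.castSucc 2 : Fin 4) = 2 from rfl, show ((1:Fin 4) < 3) = True from by decide]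
  ring

set_option maxHeartbeats 4000000 in
set_option maxRecDepth 20000 in
/-- The determinant of the block `B` factors as stated, where `α` and `α⁻¹` are the two roots
of `x² - x + 1`. -/
theorem detB_factorization (F : Type*) [Field F] [CharZero F]
    (α : F) (hα : α ^ 2 - α + 1 = 0) (a b c d : F) :
    Matrix.det
      !![0, a^2*c + a*c*d, a*b*c + a*d^2 + a*c, a*b*d + a*d, b^2*d + b*d;
         -d, c^3 + a*c - c*d, c^2*d + b*c, a*c*d + c*d^2, b*c*d + d^3;
         0, a^3 + a*b*c, a^2*b + a*b*d + a^2, a*b^2 + a*b, b^3 + b^2;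
         -(a*d), -a, -(a*c), 0, 0;
         c*d, a*c^2 - b*c, a*c*d + c^2, a^2*d + b*c*d + c*d, a*b*d + b*d^2 + d^2] =
    -(a^2) * d^2 * (a*d - b*c)^2 * (a*d - b*c - b - c - 1) *
      (a*d - b*c - c + α * (b + 1)) * (a*d - b*c - c + α⁻¹ * (b + 1)) := by
  have hα0 : α ≠ 0 := by rintro rfl; norm_num at hα
  have hinv : α⁻¹ = 1 - α := inv_eq_of_mul_eq_one_right (by linear_combination -hα)
  rw [hinv]
  rw [Matrix.det_succ_row_zero]
  simp (config := { maxSteps := 10000000, decide := true }) [Fin.sum_univ_succ, det_fin_four, Fin.succAbove, Matrix.submatrix_apply, show ((2:Fin 4).castSucc : Fin 5) = 2 from rfl, show ((3:Fin 4).castSucc : Fin 5) = 3 from rfl, show ((1:Fin 4).castSucc : Fin 5) = 1 from rfl, show ((0:Fin 4).castSucc : Fin 5) = 0 from rfl]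
  linear_combination (-(a^2)*d^2*(a*d-b*c)^2*(a*d-b*c-b-c-1)*(b+1)^2) * hα
end

section
/- Let F be a field of characteristic 0. The matrix B of the previous statement (rows [0, a²c+acd, abc+ad²+ac, abd+ad, b²d+bd], [−d, c³+ac−cd, c²d+bc, acd+cd², bcd+d³], [0, a³+abc, a²b+abd+a², ab²+ab, b³+b²], [−ad, −a, −ac, 0, 0], [cd, ac²−bc, acd+c², a²d+bcd+cd, abd+bd²+d²], specialized at (a,b,c,d) ∈ F⁴) is the zero matrix if and only if (a,b,c,d) = (0,0,0,0) or (a,b,c,d) = (0,−1,0,0). -/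
/-- The block `B` vanishes if and only if `(a,b,c,d) = (0,0,0,0)` or `(0,-1,0,0)`. -/
theorem B_eq_zero_iff (F : Type*) [Field F] [CharZero F] (a b c d : F) :
    (!![0, a^2*c + a*c*d, a*b*c + a*d^2 + a*c, a*b*d + a*d, b^2*d + b*d;
        -d, c^3 + a*c - c*d, c^2*d + b*c, a*c*d + c*d^2, b*c*d + d^3;
        0, a^3 + a*b*c, a^2*b + a*b*d + a^2, a*b^2 + a*b, b^3 + b^2;
        -(a*d), -a, -(a*c), 0, 0;
        c*d, a*c^2 - b*c, a*c*d + c^2, a^2*d + b*c*d + c*d, a*b*d + b*d^2 + d^2]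
      : Matrix (Fin 5) (Fin 5) F) = 0 ↔
    (a, b, c, d) = (0, 0, 0, 0) ∨ (a, b, c, d) = (0, -1, 0, 0) := by
  constructor
  · intro h
    have ha : a = 0 := by
      have := congrFun (congrFun h 3) 1
      simpa using this
    have hd : d = 0 := by
      have := congrFun (congrFun h 1) 0
      simpa using this
    have hc : c = 0 := by
      have := congrFun (congrFun h 1) 1
      simpa [ha, hd] using this
    have hb : b = 0 ∨ b = -1 := by
      have := congrFun (congrFun h 2) 4
      simp at this
      have : b^2 * (b + 1) = 0 := by linear_combination this
      rcases mul_eq_zero.mp this with h' | h'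
      · exact Or.inl (pow_eq_zero_iff (n := 2) (by norm_num) |>.mp h')
      · exact Or.inr (eq_neg_of_add_eq_zero_left h')
    rcases hb with hb | hb
    · left; simp [ha, hb, hc, hd]
    · right; simp [ha, hb, hc, hd]
  · rintro (h | h) <;>
    · simp only [Prod.mk.injEq] at h
      obtain ⟨ha, hb, hc, hd⟩ := h
      subst ha hb hc hd
      ext i j
      fin_cases i <;> fin_cases j <;> simp [Matrix.vecHead, Matrix.vecTail] <;> ring
end

section
/- Let F be an algebraically closed field of characteristic 0. The common zero set in F³ of the polynomials a²(a+1), ba(a+1), ca(a+1), b²(a+1), c²(a+1), b(b²+c), b(bc+a), c(bc+a), c(c²+b) equals {(0,0,0), (−1,0,0), (−1,−1,−1), (−1,α,α⁻¹), (−1,α⁻¹,α)}, where α and α⁻¹ are the two roots of x²−x+1. -/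
/-- Rank 3, case 1: the common zero set of the nine polynomials is exactly five points. -/
theorem rank3_case1_zero_set (F : Type*) [Field F] [IsAlgClosed F] [CharZero F]
    (α : F) (hα : α ^ 2 - α + 1 = 0) :
    {p : F × F × F |
      p.1 ^ 2 * (p.1 + 1) = 0 ∧
      p.2.1 * p.1 * (p.1 + 1) = 0 ∧
      p.2.2 * p.1 * (p.1 + 1) = 0 ∧
      p.2.1 ^ 2 * (p.1 + 1) = 0 ∧
      p.2.2 ^ 2 * (p.1 + 1) = 0 ∧
      p.2.1 * (p.2.1 ^ 2 + p.2.2) = 0 ∧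
      p.2.1 * (p.2.1 * p.2.2 + p.1) = 0 ∧
      p.2.2 * (p.2.1 * p.2.2 + p.1) = 0 ∧
      p.2.2 * (p.2.2 ^ 2 + p.2.1) = 0} =
    {(0, 0, 0), (-1, 0, 0), (-1, -1, -1), (-1, α, α⁻¹), (-1, α⁻¹, α)} := by
  have hα0 : α ≠ 0 := by
    intro h; rw [h] at hα; norm_num at hα
  have hinv : α⁻¹ = 1 - α := by
    field_simp
    linear_combination hα
  ext ⟨a, b, c⟩
  simp only [Set.mem_setOf_eq, Set.mem_insert_iff, Set.mem_singleton_iff, Prod.mk.injEq]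
  constructor
  · rintro ⟨h1, h2, h3, h4, h5, h6, h7, h8, h9⟩
    by_cases ha : a + 1 = 0
    · have ha' : a = -1 := by linear_combination ha
      subst ha'
      by_cases hb : b = 0
      · subst hb
        have hc : c = 0 := by
          have : c * (0 * c + -1) = 0 := h8
          have h' : -c = 0 := by linear_combination this
          linear_combination -h'
        subst hc
        right; left; exact ⟨rfl, rfl, rfl⟩
      · have h7' : b * c + -1 = 0 := by
          rcases mul_eq_zero.mp h7 with h | h
          · exact absurd h hb
          · exact h
        have h6' : b ^ 2 + c = 0 := by
          rcases mul_eq_zero.mp h6 with h | h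
          · exact absurd h hb
          · exact h
        have hc : c = -b ^ 2 := by linear_combination h6'
        subst hc
        have hb3 : b ^ 3 = -1 := by linear_combination -h7'
        have hfac : (b + 1) * (b ^ 2 - b + 1) = 0 := by linear_combination hb3
        rcases mul_eq_zero.mp hfac with hb1 | hb2
        · have : b = -1 := by linear_combination hb1
          subst this
          right; right; left; exact ⟨rfl, rfl, by ring⟩
        · have hfac2 : (b - α) * (b - (1 - α)) = 0 := by
            linear_combination hb2 - hα
          rcases mul_eq_zero.mp hfac2 with h | h
          · have hbα : b = α := by linear_combination h
            subst hbα
            right; right; right; left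
            refine ⟨rfl, rfl, ?_⟩
            rw [hinv]; linear_combination -hα
          · have hbα : b = 1 - α := by linear_combination h
            subst hbα
            right; right; right; right
            refine ⟨rfl, ?_, ?_⟩
            · rw [hinv]
            · linear_combination -hα
    · -- a + 1 ≠ 0 : a = 0, b = 0, c = 0
      have ha0 : a = 0 := by
        have := (mul_eq_zero.mp h1).resolve_right ha
        exact pow_eq_zero_iff (n := 2) (by norm_num) |>.mp this
      have hb0 : b = 0 := by
        have := (mul_eq_zero.mp h4).resolve_right ha
        exact pow_eq_zero_iff (n := 2) (by norm_num) |>.mp this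
      have hc0 : c = 0 := by
        have := (mul_eq_zero.mp h5).resolve_right ha
        exact pow_eq_zero_iff (n := 2) (by norm_num) |>.mp this
      left; exact ⟨ha0, hb0, hc0⟩
  · rintro (⟨ha, hb, hc⟩ | ⟨ha, hb, hc⟩ | ⟨ha, hb, hc⟩ | ⟨ha, hb, hc⟩ | ⟨ha, hb, hc⟩) <;>
        rw [ha, hb, hc]
    · refine ⟨by ring, by ring, by ring, by ring, by ring, by ring, by ring, by ring, by ring⟩
    · refine ⟨by ring, by ring, by ring, by ring, by ring, by ring, by ring, by ring, by ring⟩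
    · refine ⟨by ring, by ring, by ring, by ring, by ring, by ring, by ring, by ring, by ring⟩
    · rw [hinv]
      refine ⟨by ring, by ring, by ring, by ring, by ring, ?_, ?_, ?_, ?_⟩
      · linear_combination α * hα
      · linear_combination -α * hα
      · linear_combination (α - 1) * hα
      · linear_combination (1 - α) * hα
    · rw [hinv]
      refine ⟨by ring, by ring, by ring, by ring, by ring, ?_, ?_, ?_, ?_⟩
      · linear_combination (1 - α) * hα
      · linear_combination (α - 1) * hα
      · linear_combination -α * hα
      · linear_combination α * hα
end
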